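/- Let (f,g) ∈ 𝒞₁(I) and suppose there exists a continuous strictly monotone h : I → ℝ with C_{f,g} = A_h on I². Then there exist real constants α, β, γ, δ, ε, η with (α, β, γ) ≠ (0,0,0) such that αf² + βfg + γg² + δf + εg + η = 0 identically on I; equivalently, the curve x ↦ (f(x), g(x)) lies on a conic section. -/

import Mathlib

/-- The two-variable Cauchy mean generated by `f` and `g` on `I`. -/
noncomputable def cauchyMean (I : Set ℝ) (f g : ℝ → ℝ) (x y : ℝ) : ℝ :=
  if x = y then x
  else Function.invFunOn (fun t => deriv f t / deriv g t) I ((f x - f y) / (g x - g y))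

/-- The two-variable quasiarithmetic mean generated by `h` on `I`. -/
noncomputable def quasiMean (I : Set ℝ) (h : ℝ → ℝ) (x y : ℝ) : ℝ :=
  Function.invFunOn h I ((h x + h y) / 2)

namespace KPaux

open Set Filter Function

lemma abs_sub_le_of_mem_uIcc {a b c : ℝ} (h : c ∈ Set.uIcc a b) : |c - a| ≤ |b - a| := by
  rcases Set.mem_uIcc.mp h with ⟨h1, h2⟩ | ⟨h1, h2⟩
  · calc |c - a| = c - a := abs_of_nonneg (by linarith)
      _ ≤ b - a := by linarith
      _ ≤ |b - a| := le_abs_self _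
  · calc |c - a| = -(c - a) := abs_of_nonpos (by linarith)
      _ ≤ -(b - a) := by linarith
      _ ≤ |b - a| := neg_le_abs _

/-- Mean value theorem on an unordered interval. -/
lemma mvt_uIcc {F F' : ℝ → ℝ} {a b : ℝ} (hab : a ≠ b)
    (hd : ∀ t ∈ Set.uIcc a b, HasDerivAt F (F' t) t) :
    ∃ ξ ∈ Set.uIcc a b, F' ξ = (F b - F a) / (b - a) := by
  rcases hab.lt_or_gt with hlt | hlt
  · have hC : ContinuousOn F (Set.Icc a b) := fun t ht =>
      (hd t (by rw [Set.uIcc_of_le hlt.le]; exact ht)).continuousAt.continuousWithinAt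
    obtain ⟨ξ, hξ, hξe⟩ := exists_hasDerivAt_eq_slope F F' hlt hC
      (fun t ht => hd t (by rw [Set.uIcc_of_le hlt.le]; exact Set.Ioo_subset_Icc_self ht))
    exact ⟨ξ, by rw [Set.uIcc_of_le hlt.le]; exact Set.Ioo_subset_Icc_self hξ, hξe⟩
  · have hC : ContinuousOn F (Set.Icc b a) := fun t ht =>
      (hd t (by rw [Set.uIcc_of_ge hlt.le]; exact ht)).continuousAt.continuousWithinAt
    obtain ⟨ξ, hξ, hξe⟩ := exists_hasDerivAt_eq_slope F F' hlt hC
      (fun t ht => hd t (by rw [Set.uIcc_of_ge hlt.le]; exact Set.Ioo_subset_Icc_self ht))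
    refine ⟨ξ, by rw [Set.uIcc_of_ge hlt.le]; exact Set.Ioo_subset_Icc_self hξ, ?_⟩
    rw [hξe]
    rw [div_eq_div_iff (sub_ne_zero.mpr hlt.ne') (sub_ne_zero.mpr hlt.ne)]
    ring

/-- A monotone-or-antitone function is differentiable at a point of any open interval. -/
lemma exists_differentiableAt_of_monotone {F : ℝ → ℝ} (hF : Monotone F ∨ Antitone F)
    {c d : ℝ} (hcd : c < d) : ∃ s ∈ Set.Ioo c d, DifferentiableAt ℝ F s := by
  have hae : ∀ᵐ s, DifferentiableAt ℝ F s := by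
    rcases hF with hF | hF
    · exact hF.ae_differentiableAt
    · have hmono : Monotone (fun s => -F s) := fun a b hab => neg_le_neg (hF hab)
      filter_upwards [hmono.ae_differentiableAt] with s hs
      have : F = fun t => -((fun u => -F u) t) := by funext t; ring
      rw [this]
      exact hs.neg
  by_contra hcon
  push_neg at hcon
  have hsub : Set.Ioo c d ⊆ {s | ¬ DifferentiableAt ℝ F s} := fun s hs => hcon s hs
  have h0 : MeasureTheory.volume (Set.Ioo c d) = 0 :=
    MeasureTheory.measure_mono_null hsub (MeasureTheory.ae_iff.mp hae)
  rw [Real.volume_Ioo] at h0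
  have := ENNReal.ofReal_eq_zero.mp h0
  linarith

/-- Partial derivative of the difference quotient in the first variable. -/
noncomputable def N1 (f g : ℝ → ℝ) (a b : ℝ) : ℝ :=
  (deriv f a - (f a - f b) / (g a - g b) * deriv g a) / (g a - g b)

/-- Partial derivative of the difference quotient in the second variable. -/
noncomputable def N2 (f g : ℝ → ℝ) (a b : ℝ) : ℝ :=
  ((f a - f b) / (g a - g b) * deriv g b - deriv f b) / (g a - g b)

lemma hasDerivAt_N1 {f g : ℝ → ℝ} {a b : ℝ} (hfa : DifferentiableAt ℝ f a)
    (hga : DifferentiableAt ℝ g a) (hab : g a ≠ g b) :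
    HasDerivAt (fun t => (f t - f b) / (g t - g b)) (N1 f g a b) a := by
  have h1 : HasDerivAt (fun t => f t - f b) (deriv f a) a := hfa.hasDerivAt.sub_const _
  have h2 : HasDerivAt (fun t => g t - g b) (deriv g a) a := hga.hasDerivAt.sub_const _
  have : HasDerivAt (fun t => (f t - f b) / (g t - g b)) _ a := h1.div h2 (sub_ne_zero.mpr hab)
  convert this using 1
  rw [N1]
  have hne : g a - g b ≠ 0 := sub_ne_zero.mpr hab
  rw [div_eq_div_iff hne (pow_ne_zero 2 hne)]
  field_simp

lemma hasDerivAt_N2 {f g : ℝ → ℝ} {a b : ℝ} (hfb : DifferentiableAt ℝ f b)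
    (hgb : DifferentiableAt ℝ g b) (hab : g a ≠ g b) :
    HasDerivAt (fun t => (f a - f t) / (g a - g t)) (N2 f g a b) b := by
  have h1 : HasDerivAt (fun t => f a - f t) (-deriv f b) b := (hfb.hasDerivAt.const_sub _)
  have h2 : HasDerivAt (fun t => g a - g t) (-deriv g b) b := (hgb.hasDerivAt.const_sub _)
  have : HasDerivAt (fun t => (f a - f t) / (g a - g t)) _ b := h1.div h2 (sub_ne_zero.mpr hab)
  convert this using 1
  rw [N2]
  have hne : g a - g b ≠ 0 := sub_ne_zero.mpr hab
  rw [div_eq_div_iff hne (pow_ne_zero 2 hne)]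
  field_simp
  ring

section Main

variable {I : Set ℝ} {f g h : ℝ → ℝ}

/-- Differentiability of the generator `h` of the quasiarithmetic mean. -/
theorem h_differentiable
    (hI : IsOpen I)
    (hfd : ∀ x ∈ I, DifferentiableAt ℝ f x) (hgd : ∀ x ∈ I, DifferentiableAt ℝ g x)
    (hgne : ∀ x ∈ I, ∀ y ∈ I, x ≠ y → g x ≠ g y)
    (hcont : ContinuousOn h I) (hhmono : StrictMonoOn h I ∨ StrictAntiOn h I)
    (hmono : StrictMonoOn (fun t => deriv f t / deriv g t) I ∨
      StrictAntiOn (fun t => deriv f t / deriv g t) I)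
    (hM : ∀ x ∈ I, ∀ y ∈ I, quasiMean I h x y ∈ I ∧
      h (quasiMean I h x y) = (h x + h y) / 2)
    (hMΔ : ∀ x ∈ I, ∀ y ∈ I, x ≠ y →
      deriv f (quasiMean I h x y) / deriv g (quasiMean I h x y) = (f x - f y) / (g x - g y))
    {x0 : ℝ} (hx0 : x0 ∈ I) : DifferentiableAt ℝ h x0 := by
  classical
  set φ : ℝ → ℝ := fun t => deriv f t / deriv g t with hφdef
  have hφinj : Set.InjOn φ I := by
    rcases hmono with hm | hm
    · exact hm.injOn
    · exact hm.injOn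
  have hInj : Set.InjOn h I := by
    rcases hhmono with hm | hm
    · exact hm.injOn
    · exact hm.injOn
  obtain ⟨ε, hε0, hball⟩ := Metric.isOpen_iff.mp hI x0 hx0
  rw [Real.ball_eq_Ioo] at hball
  set y1 : ℝ := x0 + ε / 3 with hy1def
  set y2 : ℝ := x0 + ε / 2 with hy2def
  have hy12 : y1 < y2 := by rw [hy1def, hy2def]; linarith
  have hIccI : ∀ t ∈ Set.Icc y1 y2, t ∈ I := by
    intro t ht
    apply hball
    constructor
    · have := ht.1; rw [hy1def] at this; linarith
    · have := ht.2; rw [hy2def] at this; linarith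
  have hx0lt : ∀ t ∈ Set.Icc y1 y2, x0 < t := by
    intro t ht
    have := ht.1; rw [hy1def] at this; linarith
  set θ : ℝ → ℝ := fun y => (f x0 - f y) / (g x0 - g y) with hθdef
  have hθφ : ∀ y ∈ Set.Icc y1 y2, θ y = φ (quasiMean I h x0 y) := by
    intro y hy
    exact (hMΔ x0 hx0 y (hIccI y hy) (hx0lt y hy).ne).symm
  have hθc : ContinuousOn θ (Set.Icc y1 y2) := by
    apply ContinuousOn.div
    · exact continuousOn_const.sub fun t ht => (hfd t (hIccI t ht)).continuousAt.continuousWithinAt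
    · exact continuousOn_const.sub fun t ht => (hgd t (hIccI t ht)).continuousAt.continuousWithinAt
    · intro t ht
      exact sub_ne_zero.mpr (hgne x0 hx0 t (hIccI t ht) (hx0lt t ht).ne)
  have hIVT : Set.uIcc (θ y1) (θ y2) ⊆ θ '' Set.uIcc y1 y2 :=
    intermediate_value_uIcc (by rwa [Set.uIcc_of_le hy12.le])
  have hy1m : y1 ∈ Set.Icc y1 y2 := ⟨le_rfl, hy12.le⟩
  have hy2m : y2 ∈ Set.Icc y1 y2 := ⟨hy12.le, le_rfl⟩
  have hθne : θ y1 ≠ θ y2 := by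
    intro hcon
    rw [hθφ y1 hy1m, hθφ y2 hy2m] at hcon
    have hM1 := hM x0 hx0 y1 (hIccI y1 hy1m)
    have hM2 := hM x0 hx0 y2 (hIccI y2 hy2m)
    have hMeq : quasiMean I h x0 y1 = quasiMean I h x0 y2 := hφinj hM1.1 hM2.1 hcon
    have : h y1 = h y2 := by
      have e1 := hM1.2; have e2 := hM2.2
      rw [hMeq] at e1
      rw [e2] at e1
      linarith
    exact hy12.ne (hInj (hIccI y1 hy1m) (hIccI y2 hy2m) this)
  set c' : ℝ := min (θ y1) (θ y2) with hc'def
  set d' : ℝ := max (θ y1) (θ y2) with hd'def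
  have hc'd' : c' < d' := min_lt_max.mpr hθne
  have huIccIcc : Set.uIcc (θ y1) (θ y2) = Set.Icc c' d' := (Set.Icc_min_max).symm
  have hclamp_mem : ∀ s : ℝ, min d' (max c' s) ∈ Set.Icc c' d' := by
    intro s
    constructor
    · exact le_min hc'd'.le (le_max_left _ _)
    · exact min_le_left _ _
  have hIccim : ∀ s ∈ Set.Icc c' d', ∃ a ∈ I, φ a = s := by
    intro s hs
    rw [← huIccIcc] at hs
    obtain ⟨yw, hyw, hywθ⟩ := hIVT hs
    rw [Set.uIcc_of_le hy12.le] at hyw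
    refine ⟨quasiMean I h x0 yw, (hM x0 hx0 yw (hIccI yw hyw)).1, ?_⟩
    rw [← hθφ yw hyw, hywθ]
  set q : ℝ → ℝ := fun s => Function.invFunOn φ I (min d' (max c' s)) with hqdef
  have hqI : ∀ s : ℝ, q s ∈ I := fun s =>
    Function.invFunOn_mem (hIccim _ (hclamp_mem s))
  have hqφ : ∀ s : ℝ, φ (q s) = min d' (max c' s) := fun s =>
    Function.invFunOn_eq (hIccim _ (hclamp_mem s))
  have hclampmono : Monotone (fun s : ℝ => min d' (max c' s)) := fun s t hst =>
    min_le_min le_rfl (max_le_max le_rfl hst)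
  have hqmono : Monotone q ∨ Antitone q := by
    rcases hmono with hm | hm
    · left
      intro s t hst
      by_contra hq'
      push_neg at hq'
      have := hm (hqI t) (hqI s) hq'
      rw [hqφ t, hqφ s] at this
      exact absurd (hclampmono hst) (not_le.mpr this)
    · right
      intro s t hst
      by_contra hq'
      push_neg at hq'
      have := hm (hqI s) (hqI t) hq'
      rw [hqφ t, hqφ s] at this
      exact absurd (hclampmono hst) (not_le.mpr this)
  set ψ : ℝ → ℝ := fun s => h (q s) with hψdef
  have hψmono : Monotone ψ ∨ Antitone ψ := by
    rcases hqmono with hq | hq <;> rcases hhmono with hh | hh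
    · exact Or.inl fun s t hst => hh.monotoneOn (hqI s) (hqI t) (hq hst)
    · exact Or.inr fun s t hst => hh.antitoneOn (hqI s) (hqI t) (hq hst)
    · exact Or.inr fun s t hst => hh.monotoneOn (hqI t) (hqI s) (hq hst)
    · exact Or.inl fun s t hst => hh.antitoneOn (hqI t) (hqI s) (hq hst)
  obtain ⟨sg, hsgIoo, hsgdiff⟩ := exists_differentiableAt_of_monotone hψmono hc'd'
  obtain ⟨yg, hygu, hygθ⟩ := hIVT (by rw [huIccIcc]; exact Set.Ioo_subset_Icc_self hsgIoo)
  rw [Set.uIcc_of_le hy12.le] at hygu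
  have hygI : yg ∈ I := hIccI yg hygu
  have hx0yg : x0 ≠ yg := (hx0lt yg hygu).ne
  have hgx0yg : g x0 ≠ g yg := hgne x0 hx0 yg hygI hx0yg
  have hΔdiff : HasDerivAt (fun x => (f x - f yg) / (g x - g yg)) (N1 f g x0 yg) x0 :=
    hasDerivAt_N1 (hfd x0 hx0) (hgd x0 hx0) hgx0yg
  have hval : (f x0 - f yg) / (g x0 - g yg) = sg := hygθ
  have hev1 : ∀ᶠ x in nhds x0, (f x - f yg) / (g x - g yg) ∈ Set.Ioo c' d' := by
    have := hΔdiff.continuousAt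
    rw [ContinuousAt, hval] at this
    exact this.eventually_mem (Ioo_mem_nhds hsgIoo.1 hsgIoo.2)
  have hev2 : ∀ᶠ x in nhds x0, x ∈ I := hI.eventually_mem hx0
  have hev3 : ∀ᶠ x in nhds x0, x < y1 := by
    have : x0 ∈ Set.Iio y1 := by rw [Set.mem_Iio, hy1def]; linarith
    filter_upwards [isOpen_Iio.eventually_mem this] with x hx using hx
  have heqF : ∀ᶠ x in nhds x0, h x = 2 * ψ ((f x - f yg) / (g x - g yg)) - h yg := by
    filter_upwards [hev1, hev2, hev3] with x h1 h2 h3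
    have hxyg : x ≠ yg := (h3.trans_le hygu.1).ne
    have hMx := hM x h2 yg hygI
    have hΔx := hMΔ x h2 yg hygI hxyg
    have hclamp_eq : min d' (max c' ((f x - f yg) / (g x - g yg))) =
        (f x - f yg) / (g x - g yg) := by
      rw [max_eq_right h1.1.le, min_eq_right h1.2.le]
    have hqs : q ((f x - f yg) / (g x - g yg)) = quasiMean I h x yg := by
      apply hφinj (hqI _) hMx.1
      rw [hqφ, hclamp_eq]
      exact hΔx.symm
    show h x = 2 * h (q ((f x - f yg) / (g x - g yg))) - h yg
    rw [hqs, hMx.2]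
    ring
  have hFdiff : DifferentiableAt ℝ
      (fun x => 2 * ψ ((f x - f yg) / (g x - g yg)) - h yg) x0 := by
    apply DifferentiableAt.sub_const
    apply DifferentiableAt.const_mul
    have hinner : DifferentiableAt ℝ (fun x => (f x - f yg) / (g x - g yg)) x0 :=
      hΔdiff.differentiableAt
    have houter : DifferentiableAt ℝ ψ ((f x0 - f yg) / (g x0 - g yg)) := by
      rw [hval]; exact hsgdiff
    exact DifferentiableAt.comp (g := ψ) x0 houter hinner
  exact hFdiff.congr_of_eventuallyEq heqF

/-- Localization of the inverse of `h`. -/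
lemma Yloc (hI : IsOpen I) (hcont : ContinuousOn h I)
    (hhmono : StrictMonoOn h I ∨ StrictAntiOn h I)
    {x0 y0 δ : ℝ} (hx0 : x0 ∈ I) (hy0 : y0 ∈ I) (hδ : 0 < δ)
    (hsub : Set.Icc (y0 - δ) (y0 + δ) ⊆ I) :
    ∀ᶠ x in nhds x0, Function.invFunOn h I (h x0 + h y0 - h x) ∈ I ∧
      h (Function.invFunOn h I (h x0 + h y0 - h x)) = h x0 + h y0 - h x ∧
      |Function.invFunOn h I (h x0 + h y0 - h x) - y0| < δ := by
  have hy0l : y0 - δ ∈ I := hsub ⟨le_rfl, by linarith⟩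
  have hy0r : y0 + δ ∈ I := hsub ⟨by linarith, le_rfl⟩
  have hcx : ContinuousAt h x0 := hcont.continuousAt (hI.mem_nhds hx0)
  have htend : ContinuousAt (fun x => h x0 + h y0 - h x) x0 := continuousAt_const.sub hcx
  rcases hhmono with hm | hm
  · have h1 : h (y0 - δ) < h y0 := hm hy0l hy0 (by linarith)
    have h2 : h y0 < h (y0 + δ) := hm hy0 hy0r (by linarith)
    have hIVT : Set.Icc (h (y0 - δ)) (h (y0 + δ)) ⊆ h '' Set.Icc (y0 - δ) (y0 + δ) :=
      intermediate_value_Icc (by linarith) (hcont.mono hsub)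
    have hmem : h x0 + h y0 - h x0 ∈ Set.Ioo (h (y0 - δ)) (h (y0 + δ)) := by
      have : h x0 + h y0 - h x0 = h y0 := by ring
      rw [this]; exact ⟨h1, h2⟩
    have hev : ∀ᶠ x in nhds x0, h x0 + h y0 - h x ∈ Set.Ioo (h (y0 - δ)) (h (y0 + δ)) :=
      htend.eventually_mem (isOpen_Ioo.mem_nhds hmem)
    filter_upwards [hev] with x hx
    have hwit : ∃ a ∈ I, h a = h x0 + h y0 - h x := by
      obtain ⟨w, hw, hweq⟩ := hIVT (Set.Ioo_subset_Icc_self hx)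
      exact ⟨w, hsub hw, hweq⟩
    have hYI := Function.invFunOn_mem hwit
    have hYh := Function.invFunOn_eq hwit
    refine ⟨hYI, hYh, ?_⟩
    rw [abs_lt]
    constructor
    · by_contra hle
      push_neg at hle
      have hle' : Function.invFunOn h I (h x0 + h y0 - h x) ≤ y0 - δ := by linarith
      have := hm.monotoneOn hYI hy0l hle'
      rw [hYh] at this
      have := hx.1; linarith
    · by_contra hle
      push_neg at hle
      have hle' : y0 + δ ≤ Function.invFunOn h I (h x0 + h y0 - h x) := by linarith
      have := hm.monotoneOn hy0r hYI hle'
      rw [hYh] at this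
      have := hx.2; linarith
  · have h1 : h (y0 + δ) < h y0 := hm hy0 hy0r (by linarith)
    have h2 : h y0 < h (y0 - δ) := hm hy0l hy0 (by linarith)
    have hIVT : Set.Icc (h (y0 + δ)) (h (y0 - δ)) ⊆ h '' Set.Icc (y0 - δ) (y0 + δ) :=
      intermediate_value_Icc' (by linarith) (hcont.mono hsub)
    have hmem : h x0 + h y0 - h x0 ∈ Set.Ioo (h (y0 + δ)) (h (y0 - δ)) := by
      have : h x0 + h y0 - h x0 = h y0 := by ring
      rw [this]; exact ⟨h1, h2⟩
    have hev : ∀ᶠ x in nhds x0, h x0 + h y0 - h x ∈ Set.Ioo (h (y0 + δ)) (h (y0 - δ)) :=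
      htend.eventually_mem (isOpen_Ioo.mem_nhds hmem)
    filter_upwards [hev] with x hx
    have hwit : ∃ a ∈ I, h a = h x0 + h y0 - h x := by
      obtain ⟨w, hw, hweq⟩ := hIVT (Set.Ioo_subset_Icc_self hx)
      exact ⟨w, hsub hw, hweq⟩
    have hYI := Function.invFunOn_mem hwit
    have hYh := Function.invFunOn_eq hwit
    refine ⟨hYI, hYh, ?_⟩
    rw [abs_lt]
    constructor
    · by_contra hle
      push_neg at hle
      have hle' : Function.invFunOn h I (h x0 + h y0 - h x) ≤ y0 - δ := by linarith
      have := hm.antitoneOn hYI hy0l hle'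
      rw [hYh] at this
      have := hx.2; linarith
    · by_contra hle
      push_neg at hle
      have hle' : y0 + δ ≤ Function.invFunOn h I (h x0 + h y0 - h x) := by linarith
      have := hm.antitoneOn hy0r hYI hle'
      rw [hYh] at this
      have := hx.1; linarith

/-- The key differential identity relating `h'` and the partial derivatives of the
difference quotient. -/
theorem key_identity
    (hI : IsOpen I)
    (hfd : ∀ x ∈ I, DifferentiableAt ℝ f x) (hgd : ∀ x ∈ I, DifferentiableAt ℝ g x)
    (hgne : ∀ x ∈ I, ∀ y ∈ I, x ≠ y → g x ≠ g y)
    (hcont : ContinuousOn h I) (hhmono : StrictMonoOn h I ∨ StrictAntiOn h I)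
    (hf'c : ContinuousOn (deriv f) I) (hg'c : ContinuousOn (deriv g) I)
    (hM : ∀ x ∈ I, ∀ y ∈ I, quasiMean I h x y ∈ I ∧
      h (quasiMean I h x y) = (h x + h y) / 2)
    (hMΔ : ∀ x ∈ I, ∀ y ∈ I, x ≠ y →
      deriv f (quasiMean I h x y) / deriv g (quasiMean I h x y) = (f x - f y) / (g x - g y))
    (hN1 : ∀ x ∈ I, ∀ y ∈ I, x ≠ y → N1 f g x y ≠ 0)
    (hN2 : ∀ x ∈ I, ∀ y ∈ I, x ≠ y → N2 f g x y ≠ 0)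
    (hhdiff : ∀ x ∈ I, DifferentiableAt ℝ h x)
    {x0 y0 : ℝ} (hx0 : x0 ∈ I) (hy0 : y0 ∈ I) (hne0 : x0 ≠ y0) :
    deriv h y0 * N1 f g x0 y0 = deriv h x0 * N2 f g x0 y0 := by
  classical
  have hInj : Set.InjOn h I := by
    rcases hhmono with hm | hm
    · exact hm.injOn
    · exact hm.injOn
  have hd0 : 0 < |x0 - y0| := abs_pos.mpr (sub_ne_zero.mpr hne0)
  obtain ⟨εx, hεx0, hballx⟩ := Metric.isOpen_iff.mp hI x0 hx0
  rw [Real.ball_eq_Ioo] at hballx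
  obtain ⟨εy, hεy0, hbally⟩ := Metric.isOpen_iff.mp hI y0 hy0
  rw [Real.ball_eq_Ioo] at hbally
  set δ : ℝ := min (εy / 2) (|x0 - y0| / 4) with hδdef
  have hδ0 : 0 < δ := lt_min (by linarith) (by linarith)
  have hδy : δ ≤ εy / 2 := min_le_left _ _
  have hδ4 : δ ≤ |x0 - y0| / 4 := min_le_right _ _
  set r : ℝ := min (εx / 2) (|x0 - y0| / 4) with hrdef
  have hr0 : 0 < r := lt_min (by linarith) (by linarith)
  have hrx : r ≤ εx / 2 := min_le_left _ _
  have hr4 : r ≤ |x0 - y0| / 4 := min_le_right _ _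
  have hsubY : Set.Icc (y0 - δ) (y0 + δ) ⊆ I := by
    intro t ht
    exact hbally ⟨by linarith [ht.1], by linarith [ht.2]⟩
  have hsubX : Set.Ioo (x0 - r) (x0 + r) ⊆ I := by
    intro t ht
    exact hballx ⟨by linarith [ht.1], by linarith [ht.2]⟩
  have hdisj : ∀ a ∈ Set.Ioo (x0 - r) (x0 + r), ∀ b ∈ Set.Icc (y0 - δ) (y0 + δ), a ≠ b := by
    intro a ha b hb hcon
    have h1 : |a - x0| < r := by rw [abs_lt]; exact ⟨by linarith [ha.1], by linarith [ha.2]⟩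
    have h2 : |b - y0| ≤ δ := by rw [abs_le]; exact ⟨by linarith [hb.1], by linarith [hb.2]⟩
    have h3 : |x0 - y0| ≤ |x0 - a| + |a - y0| := abs_sub_le x0 a y0
    have h4 : |x0 - a| = |a - x0| := abs_sub_comm _ _
    have h5 : |a - y0| = |b - y0| := by rw [hcon]
    linarith
  set Y : ℝ → ℝ := fun x => Function.invFunOn h I (h x0 + h y0 - h x) with hYdef
  have hYloc : ∀ δ' : ℝ, 0 < δ' → δ' ≤ δ → ∀ᶠ x in nhds x0,
      Y x ∈ I ∧ h (Y x) = h x0 + h y0 - h x ∧ |Y x - y0| < δ' := by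
    intro δ' h0 hle
    exact Yloc hI hcont hhmono hx0 hy0 h0
      (fun t ht => hsubY ⟨by linarith [ht.1], by linarith [ht.2]⟩)
  have hYx0 : Y x0 = y0 := by
    have hwit : ∃ a ∈ I, h a = h x0 + h y0 - h x0 := ⟨y0, hy0, by ring⟩
    exact hInj (Function.invFunOn_mem hwit) hy0 (by rw [Function.invFunOn_eq hwit]; ring)
  have hN2x0y0 := hN2 x0 hx0 y0 hy0 hne0
  have hgx0y0 : g x0 ≠ g y0 := hgne x0 hx0 y0 hy0 hne0
  set L : ℝ := -(N1 f g x0 y0 / N2 f g x0 y0) with hLdef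
  set Φ : ℝ × ℝ × ℝ → ℝ := fun p => -(N1 f g p.1 p.2.1 / N2 f g x0 p.2.2) with hΦdef
  have hΦval : Φ (x0, y0, y0) = L := rfl
  have hΦcont : ContinuousAt Φ (x0, y0, y0) := by
    have hP1 : ContinuousAt (fun p : ℝ × ℝ × ℝ => p.1) (x0, y0, y0) := continuousAt_fst
    have hP2 : ContinuousAt (fun p : ℝ × ℝ × ℝ => p.2.1) (x0, y0, y0) :=
      continuousAt_fst.comp continuousAt_snd
    have hP3 : ContinuousAt (fun p : ℝ × ℝ × ℝ => p.2.2) (x0, y0, y0) :=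
      continuousAt_snd.comp continuousAt_snd
    have hdf1 : ContinuousAt (fun p : ℝ × ℝ × ℝ => deriv f p.1) (x0, y0, y0) :=
      ContinuousAt.comp (g := deriv f) (hf'c.continuousAt (hI.mem_nhds hx0)) hP1
    have hdg1 : ContinuousAt (fun p : ℝ × ℝ × ℝ => deriv g p.1) (x0, y0, y0) :=
      ContinuousAt.comp (g := deriv g) (hg'c.continuousAt (hI.mem_nhds hx0)) hP1
    have hdf3 : ContinuousAt (fun p : ℝ × ℝ × ℝ => deriv f p.2.2) (x0, y0, y0) :=
      ContinuousAt.comp (g := deriv f) (hf'c.continuousAt (hI.mem_nhds hy0)) hP3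
    have hdg3 : ContinuousAt (fun p : ℝ × ℝ × ℝ => deriv g p.2.2) (x0, y0, y0) :=
      ContinuousAt.comp (g := deriv g) (hg'c.continuousAt (hI.mem_nhds hy0)) hP3
    have hf1 : ContinuousAt (fun p : ℝ × ℝ × ℝ => f p.1) (x0, y0, y0) :=
      ((hfd x0 hx0).continuousAt).comp hP1
    have hg1 : ContinuousAt (fun p : ℝ × ℝ × ℝ => g p.1) (x0, y0, y0) :=
      ((hgd x0 hx0).continuousAt).comp hP1
    have hf2 : ContinuousAt (fun p : ℝ × ℝ × ℝ => f p.2.1) (x0, y0, y0) :=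
      ((hfd y0 hy0).continuousAt).comp hP2
    have hg2 : ContinuousAt (fun p : ℝ × ℝ × ℝ => g p.2.1) (x0, y0, y0) :=
      ((hgd y0 hy0).continuousAt).comp hP2
    have hf3 : ContinuousAt (fun p : ℝ × ℝ × ℝ => f p.2.2) (x0, y0, y0) :=
      ((hfd y0 hy0).continuousAt).comp hP3
    have hg3 : ContinuousAt (fun p : ℝ × ℝ × ℝ => g p.2.2) (x0, y0, y0) :=
      ((hgd y0 hy0).continuousAt).comp hP3
    have hden1 : (fun p : ℝ × ℝ × ℝ => g p.1 - g p.2.1) (x0, y0, y0) ≠ 0 :=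
      sub_ne_zero.mpr hgx0y0
    have hden3 : (fun p : ℝ × ℝ × ℝ => g x0 - g p.2.2) (x0, y0, y0) ≠ 0 :=
      sub_ne_zero.mpr hgx0y0
    have hcN1 : ContinuousAt (fun p : ℝ × ℝ × ℝ => N1 f g p.1 p.2.1) (x0, y0, y0) := by
      show ContinuousAt (fun p : ℝ × ℝ × ℝ =>
        (deriv f p.1 - (f p.1 - f p.2.1) / (g p.1 - g p.2.1) * deriv g p.1) /
          (g p.1 - g p.2.1)) (x0, y0, y0)
      exact ((hdf1.sub (((hf1.sub hf2).div (hg1.sub hg2) hden1).mul hdg1)).div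
        (hg1.sub hg2) hden1)
    have hcN2 : ContinuousAt (fun p : ℝ × ℝ × ℝ => N2 f g x0 p.2.2) (x0, y0, y0) := by
      show ContinuousAt (fun p : ℝ × ℝ × ℝ =>
        ((f x0 - f p.2.2) / (g x0 - g p.2.2) * deriv g p.2.2 - deriv f p.2.2) /
          (g x0 - g p.2.2)) (x0, y0, y0)
      exact (((((continuousAt_const.sub hf3).div (continuousAt_const.sub hg3) hden3).mul
        hdg3).sub hdf3).div (continuousAt_const.sub hg3) hden3)
    exact ((hcN1.div hcN2 hN2x0y0)).neg
  have hslope : Filter.Tendsto (fun x => (Y x - y0) / (x - x0))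
      (nhdsWithin x0 {x0}ᶜ) (nhds L) := by
    rw [Metric.tendsto_nhds]
    intro ε' hε'
    obtain ⟨ρ, hρ0, hρ⟩ := Metric.continuousAt_iff.mp hΦcont ε' hε'
    have hδ''0 : 0 < min δ (ρ / 2) := lt_min hδ0 (by linarith)
    have hr20 : 0 < min r (ρ / 2) := lt_min hr0 (by linarith)
    have hball2 : ∀ᶠ x in nhds x0, x ∈ Set.Ioo (x0 - min r (ρ / 2)) (x0 + min r (ρ / 2)) :=
      isOpen_Ioo.eventually_mem ⟨by linarith, by linarith⟩
    have hevY := hYloc (min δ (ρ / 2)) hδ''0 (min_le_left _ _)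
    filter_upwards [hevY.filter_mono nhdsWithin_le_nhds,
      hball2.filter_mono nhdsWithin_le_nhds, self_mem_nhdsWithin] with x hYx hxb hxne
    have hxne' : x ≠ x0 := by simpa using hxne
    have hxr : |x - x0| < min r (ρ / 2) := by
      rw [abs_lt]; exact ⟨by linarith [hxb.1], by linarith [hxb.2]⟩
    have hYxI := hYx.1
    have hYxh := hYx.2.1
    have hYxd : |Y x - y0| < min δ (ρ / 2) := hYx.2.2
    have hYxδ : |Y x - y0| < δ := lt_of_lt_of_le hYxd (min_le_left _ _)
    have hYIcc : Y x ∈ Set.Icc (y0 - δ) (y0 + δ) := by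
      have := abs_lt.mp hYxδ; exact ⟨by linarith [this.1], by linarith [this.2]⟩
    have huIccsub : ∀ t ∈ Set.uIcc x0 x, t ∈ Set.Ioo (x0 - r) (x0 + r) := by
      intro t ht
      have h1 := abs_sub_le_of_mem_uIcc ht
      have h2 := lt_of_le_of_lt h1 hxr
      have h3 := abs_lt.mp h2
      exact ⟨by linarith [h3.1, min_le_left r (ρ / 2)],
        by linarith [h3.2, min_le_left r (ρ / 2)]⟩
    have hx0mem : x0 ∈ Set.Ioo (x0 - r) (x0 + r) := ⟨by linarith, by linarith⟩
    have hxmem : x ∈ Set.Ioo (x0 - r) (x0 + r) := huIccsub x Set.right_mem_uIcc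
    have hxI : x ∈ I := hsubX hxmem
    have hxYx : x ≠ Y x := hdisj x hxmem (Y x) hYIcc
    have hx0Yx : x0 ≠ Y x := hdisj x0 hx0mem (Y x) hYIcc
    have hMcommon : quasiMean I h x (Y x) = quasiMean I h x0 y0 := by
      apply hInj (hM x hxI (Y x) hYxI).1 (hM x0 hx0 y0 hy0).1
      rw [(hM x hxI (Y x) hYxI).2, (hM x0 hx0 y0 hy0).2, hYxh]; ring
    have hconst : (f x - f (Y x)) / (g x - g (Y x)) = (f x0 - f y0) / (g x0 - g y0) := by
      rw [← hMΔ x hxI (Y x) hYxI hxYx, ← hMΔ x0 hx0 y0 hy0 hne0, hMcommon]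
    obtain ⟨ξ, hξmem, hξeq⟩ := mvt_uIcc (F := fun t => (f t - f (Y x)) / (g t - g (Y x)))
      (F' := fun t => N1 f g t (Y x)) (Ne.symm hxne')
      (fun t ht => hasDerivAt_N1 (hfd t (hsubX (huIccsub t ht)))
        (hgd t (hsubX (huIccsub t ht)))
        (hgne t (hsubX (huIccsub t ht)) (Y x) hYxI (hdisj t (huIccsub t ht) (Y x) hYIcc)))
    have hξI : ξ ∈ I := hsubX (huIccsub ξ hξmem)
    have hξYx : ξ ≠ Y x := hdisj ξ (huIccsub ξ hξmem) (Y x) hYIcc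
    have hYxy0 : Y x ≠ y0 := by
      intro hcon
      apply hN1 ξ hξI (Y x) hYxI hξYx
      rw [hcon] at hconst
      rw [hξeq, hcon, hconst]
      simp
    have hu2I : ∀ t ∈ Set.uIcc y0 (Y x), t ∈ I := by
      intro t ht
      have h1 := lt_of_le_of_lt (abs_sub_le_of_mem_uIcc ht) hYxδ
      have h2 := abs_lt.mp h1
      exact hsubY ⟨by linarith [h2.1], by linarith [h2.2]⟩
    have hu2Icc : ∀ t ∈ Set.uIcc y0 (Y x), t ∈ Set.Icc (y0 - δ) (y0 + δ) := by
      intro t ht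
      have h1 := lt_of_le_of_lt (abs_sub_le_of_mem_uIcc ht) hYxδ
      have h2 := abs_lt.mp h1
      exact ⟨by linarith [h2.1], by linarith [h2.2]⟩
    obtain ⟨η, hηmem, hηeq⟩ := mvt_uIcc (F := fun t => (f x0 - f t) / (g x0 - g t))
      (F' := fun t => N2 f g x0 t) (Ne.symm hYxy0)
      (fun t ht => hasDerivAt_N2 (hfd t (hu2I t ht)) (hgd t (hu2I t ht))
        (hgne x0 hx0 t (hu2I t ht) (hdisj x0 hx0mem t (hu2Icc t ht))))
    have hηI : η ∈ I := hu2I η hηmem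
    have hx0η : x0 ≠ η := hdisj x0 hx0mem η (hu2Icc η hηmem)
    have hN2η := hN2 x0 hx0 η hηI hx0η
    have hABne : (f x0 - f (Y x)) / (g x0 - g (Y x)) - (f x0 - f y0) / (g x0 - g y0) ≠ 0 := by
      intro hcon
      apply hN2η
      rw [hηeq]
      rw [show (f x0 - f (Y x)) / (g x0 - g (Y x)) - (f x0 - f y0) / (g x0 - g y0) = 0
        from hcon]
      simp
    have hslopeval : (Y x - y0) / (x - x0) = Φ (ξ, Y x, η) := by
      show _ = -(N1 f g ξ (Y x) / N2 f g x0 η)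
      rw [hξeq, hηeq, hconst]
      have e1 : x - x0 ≠ 0 := sub_ne_zero.mpr hxne'
      have e2 : Y x - y0 ≠ 0 := sub_ne_zero.mpr hYxy0
      field_simp
      have hD : (g x0 - g y0) * (f x0 - f (Y x)) / (g x0 - g (Y x)) - (f x0 - f y0) ≠ 0 := by
        have e3 : g x0 - g y0 ≠ 0 := sub_ne_zero.mpr hgx0y0
        rw [show (g x0 - g y0) * (f x0 - f (Y x)) / (g x0 - g (Y x)) - (f x0 - f y0) =
          (g x0 - g y0) * ((f x0 - f (Y x)) / (g x0 - g (Y x)) - (f x0 - f y0) / (g x0 - g y0))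
          by field_simp]
        exact mul_ne_zero e3 hABne
      rw [show f x0 - f y0 - (g x0 - g y0) * (f x0 - f (Y x)) / (g x0 - g (Y x)) =
        -((g x0 - g y0) * (f x0 - f (Y x)) / (g x0 - g (Y x)) - (f x0 - f y0)) by ring,
        neg_div, div_self hD, neg_neg]
    rw [hslopeval, ← hΦval]
    apply hρ
    have hd1 : dist ξ x0 < ρ := by
      rw [Real.dist_eq]
      calc |ξ - x0| ≤ |x - x0| := abs_sub_le_of_mem_uIcc hξmem
        _ < min r (ρ / 2) := hxr
        _ ≤ ρ / 2 := min_le_right _ _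
        _ < ρ := by linarith
    have hd2 : dist (Y x) y0 < ρ := by
      rw [Real.dist_eq]
      calc |Y x - y0| < min δ (ρ / 2) := hYxd
        _ ≤ ρ / 2 := min_le_right _ _
        _ < ρ := by linarith
    have hd3 : dist η y0 < ρ := by
      rw [Real.dist_eq]
      calc |η - y0| ≤ |Y x - y0| := abs_sub_le_of_mem_uIcc hηmem
        _ < min δ (ρ / 2) := hYxd
        _ ≤ ρ / 2 := min_le_right _ _
        _ < ρ := by linarith
    rw [Prod.dist_eq]
    apply max_lt hd1
    rw [Prod.dist_eq]
    exact max_lt hd2 hd3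
  have hYder : HasDerivAt Y L x0 := by
    rw [hasDerivAt_iff_tendsto_slope]
    have hfe : slope Y x0 = fun x => (Y x - y0) / (x - x0) := by
      funext t
      rw [slope_def_field, hYx0]
    rw [hfe]
    exact hslope
  have hhval : HasDerivAt h (deriv h y0) (Y x0) := by
    rw [hYx0]; exact (hhdiff y0 hy0).hasDerivAt
  have hcompose : HasDerivAt (fun x => h (Y x)) (deriv h y0 * L) x0 :=
    HasDerivAt.comp x0 hhval hYder
  have hEq2 : (fun x => h (Y x)) =ᶠ[nhds x0] (fun x => h x0 + h y0 - h x) := by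
    filter_upwards [hYloc δ hδ0 le_rfl] with x hx using hx.2.1
  have hcompose2 : HasDerivAt (fun x => h x0 + h y0 - h x) (deriv h y0 * L) x0 :=
    hcompose.congr_of_eventuallyEq hEq2.symm
  have hsub2 : HasDerivAt (fun x => h x0 + h y0 - h x) (-deriv h x0) x0 :=
    ((hhdiff x0 hx0).hasDerivAt).const_sub (h x0 + h y0)
  have huniq : deriv h y0 * L = -deriv h x0 := hcompose2.unique hsub2
  rw [hLdef] at huniq
  field_simp at huniq
  linarith [huniq]

end Main

end KPaux

/-- If the Cauchy mean of a 𝒞₁ pair is a quasiarithmetic mean, then the curve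
x ↦ (f x, g x) lies on a conic section. -/
theorem conic_of_cauchyMean_eq_quasiMean
    (I : Set ℝ) (hI : IsOpen I) (hIc : I.OrdConnected) (hne : I.Nonempty)
    (f g : ℝ → ℝ)
    (hf : ContDiffOn ℝ 1 f I) (hg : ContDiffOn ℝ 1 g I)
    (hg' : ∀ x ∈ I, deriv g x ≠ 0)
    (hmono : StrictMonoOn (fun x => deriv f x / deriv g x) I ∨
             StrictAntiOn (fun x => deriv f x / deriv g x) I)
    (h : ℝ → ℝ) (hcont : ContinuousOn h I)
    (hhmono : StrictMonoOn h I ∨ StrictAntiOn h I)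
    (heq : ∀ x ∈ I, ∀ y ∈ I, cauchyMean I f g x y = quasiMean I h x y) :
    ∃ α β γ δ ε η : ℝ, (α, β, γ) ≠ (0, 0, 0) ∧
      ∀ x ∈ I,
        α * f x ^ 2 + β * f x * g x + γ * g x ^ 2 + δ * f x + ε * g x + η = 0 := by
  classical
  open KPaux in
  have hconv : Convex ℝ I := hIc.convex
  have hfd : ∀ x ∈ I, DifferentiableAt ℝ f x := fun x hx =>
    (hf.differentiableOn one_ne_zero).differentiableAt (hI.mem_nhds hx)
  have hgd : ∀ x ∈ I, DifferentiableAt ℝ g x := fun x hx =>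
    (hg.differentiableOn one_ne_zero).differentiableAt (hI.mem_nhds hx)
  have hf'c : ContinuousOn (deriv f) I := hf.continuousOn_deriv_of_isOpen hI le_rfl
  have hg'c : ContinuousOn (deriv g) I := hg.continuousOn_deriv_of_isOpen hI le_rfl
  have hgsign : (∀ x ∈ I, 0 < deriv g x) ∨ (∀ x ∈ I, deriv g x < 0) := by
    by_contra hc
    push_neg at hc
    obtain ⟨⟨a, ha, hale⟩, ⟨b, hb, hble⟩⟩ := hc
    have ha' : deriv g a ≤ 0 := hale
    have hb' : 0 ≤ deriv g b := hble
    have h0 : (0 : ℝ) ∈ Set.uIcc (deriv g a) (deriv g b) := Set.mem_uIcc.mpr (Or.inl ⟨ha', hb'⟩)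
    have := intermediate_value_uIcc (hg'c.mono (hIc.uIcc_subset ha hb)) h0
    obtain ⟨c, hc1, hc2⟩ := this
    exact hg' c (hIc.uIcc_subset ha hb hc1) hc2
  have hgmono : StrictMonoOn g I ∨ StrictAntiOn g I := by
    rcases hgsign with hs | hs
    · exact Or.inl (strictMonoOn_of_deriv_pos hconv hg.continuousOn
        (fun x hx => hs x (by rwa [hI.interior_eq] at hx)))
    · exact Or.inr (strictAntiOn_of_deriv_neg hconv hg.continuousOn
        (fun x hx => hs x (by rwa [hI.interior_eq] at hx)))
  have hgne : ∀ x ∈ I, ∀ y ∈ I, x ≠ y → g x ≠ g y := by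
    intro x hx y hy hxy
    rcases hgmono with hm | hm
    · exact hm.injOn.ne hx hy hxy
    · exact hm.injOn.ne hx hy hxy
  have hφinj : Set.InjOn (fun t => deriv f t / deriv g t) I := by
    rcases hmono with hm | hm
    · exact hm.injOn
    · exact hm.injOn
  have hInjh : Set.InjOn h I := by
    rcases hhmono with hm | hm
    · exact hm.injOn
    · exact hm.injOn
  have hM : ∀ x ∈ I, ∀ y ∈ I, quasiMean I h x y ∈ I ∧
      h (quasiMean I h x y) = (h x + h y) / 2 := by
    intro x hx y hy
    have husub : Set.uIcc x y ⊆ I := hIc.uIcc_subset hx hy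
    have hIVT := intermediate_value_uIcc (hcont.mono husub)
    have havg : (h x + h y) / 2 ∈ Set.uIcc (h x) (h y) := by
      rcases le_total (h x) (h y) with hle | hle
      · rw [Set.uIcc_of_le hle]; exact ⟨by linarith, by linarith⟩
      · rw [Set.uIcc_of_ge hle]; exact ⟨by linarith, by linarith⟩
    have hwit : ∃ a ∈ I, h a = (h x + h y) / 2 := by
      obtain ⟨w, hw, hweq⟩ := hIVT havg
      exact ⟨w, husub hw, hweq⟩
    exact ⟨Function.invFunOn_mem hwit, Function.invFunOn_eq hwit⟩
  have hqsymm : ∀ x y : ℝ, quasiMean I h x y = quasiMean I h y x := by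
    intro x y
    simp only [quasiMean]
    rw [add_comm]
  have hMΔ : ∀ x ∈ I, ∀ y ∈ I, x ≠ y →
      deriv f (quasiMean I h x y) / deriv g (quasiMean I h x y) =
        (f x - f y) / (g x - g y) := by
    have aux : ∀ x ∈ I, ∀ y ∈ I, x < y →
        deriv f (quasiMean I h x y) / deriv g (quasiMean I h x y) =
          (f x - f y) / (g x - g y) := by
      intro x hx y hy hxy
      have hIcc : Set.Icc x y ⊆ I := hIc.out hx hy
      have hfc2 : ContinuousOn f (Set.Icc x y) := fun t ht =>
        (hfd t (hIcc ht)).continuousAt.continuousWithinAt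
      have hgc2 : ContinuousOn g (Set.Icc x y) := fun t ht =>
        (hgd t (hIcc ht)).continuousAt.continuousWithinAt
      have hfd2 : DifferentiableOn ℝ f (Set.Ioo x y) := fun t ht =>
        (hfd t (hIcc (Set.Ioo_subset_Icc_self ht))).differentiableWithinAt
      have hgd2 : DifferentiableOn ℝ g (Set.Ioo x y) := fun t ht =>
        (hgd t (hIcc (Set.Ioo_subset_Icc_self ht))).differentiableWithinAt
      obtain ⟨c, hc, hceq⟩ := exists_ratio_deriv_eq_ratio_slope f hxy hfc2 hfd2 g hgc2 hgd2
      have hcI : c ∈ I := hIcc (Set.Ioo_subset_Icc_self hc)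
      have hgxy : g x - g y ≠ 0 := sub_ne_zero.mpr (hgne x hx y hy hxy.ne)
      have hΔc : deriv f c / deriv g c = (f x - f y) / (g x - g y) := by
        rw [div_eq_div_iff (hg' c hcI) hgxy]
        linear_combination -hceq
      have hwit : ∃ a ∈ I, (fun t => deriv f t / deriv g t) a = (f x - f y) / (g x - g y) :=
        ⟨c, hcI, hΔc⟩
      have h1 : cauchyMean I f g x y =
          Function.invFunOn (fun t => deriv f t / deriv g t) I ((f x - f y) / (g x - g y)) := by
        rw [cauchyMean, if_neg hxy.ne]
      have h2 := Function.invFunOn_eq hwit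
      calc deriv f (quasiMean I h x y) / deriv g (quasiMean I h x y)
          = (fun t => deriv f t / deriv g t) (cauchyMean I f g x y) := by
            rw [heq x hx y hy]
        _ = (f x - f y) / (g x - g y) := by rw [h1]; exact h2
    intro x hx y hy hxy
    rcases hxy.lt_or_gt with hlt | hlt
    · exact aux x hx y hy hlt
    · have := aux y hy x hx hlt
      rw [hqsymm x y]
      rw [this]
      rw [show (f x - f y) / (g x - g y) = (f y - f x) / (g y - g x) from by
        rw [← neg_sub (f y) (f x), ← neg_sub (g y) (g x), neg_div_neg_eq]]
  have hMbtw : ∀ x ∈ I, ∀ y ∈ I, x < y → quasiMean I h x y ∈ Set.Ioo x y := by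
    intro x hx y hy hxy
    obtain ⟨hMI, hMh⟩ := hM x hx y hy
    rcases hhmono with hm | hm
    · have h1 : h x < h y := hm hx hy hxy
      constructor
      · by_contra hle
        push_neg at hle
        have := hm.monotoneOn hMI hx hle
        rw [hMh] at this; linarith
      · by_contra hle
        push_neg at hle
        have := hm.monotoneOn hy hMI hle
        rw [hMh] at this; linarith
    · have h1 : h y < h x := hm hx hy hxy
      constructor
      · by_contra hle
        push_neg at hle
        have := hm.antitoneOn hMI hx hle
        rw [hMh] at this; linarith
      · by_contra hle
        push_neg at hle
        have := hm.antitoneOn hy hMI hle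
        rw [hMh] at this; linarith
  have hMne : ∀ x ∈ I, ∀ y ∈ I, x ≠ y →
      quasiMean I h x y ≠ x ∧ quasiMean I h x y ≠ y := by
    intro x hx y hy hxy
    rcases hxy.lt_or_gt with hlt | hlt
    · have := hMbtw x hx y hy hlt
      exact ⟨this.1.ne', this.2.ne⟩
    · have := hMbtw y hy x hx hlt
      rw [hqsymm x y]
      exact ⟨this.2.ne, this.1.ne'⟩
  have hN1ne : ∀ x ∈ I, ∀ y ∈ I, x ≠ y → KPaux.N1 f g x y ≠ 0 := by
    intro x hx y hy hxy
    have hgxy : g x - g y ≠ 0 := sub_ne_zero.mpr (hgne x hx y hy hxy)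
    have hMI := (hM x hx y hy).1
    have hφne : deriv f x / deriv g x ≠ (f x - f y) / (g x - g y) := by
      rw [← hMΔ x hx y hy hxy]
      exact hφinj.ne hx hMI (Ne.symm (hMne x hx y hy hxy).1)
    have hnum : deriv f x - (f x - f y) / (g x - g y) * deriv g x =
        deriv g x * (deriv f x / deriv g x - (f x - f y) / (g x - g y)) := by
      field_simp [hg' x hx]
    rw [KPaux.N1, hnum]
    exact div_ne_zero (mul_ne_zero (hg' x hx) (sub_ne_zero.mpr hφne)) hgxy
  have hN2ne : ∀ x ∈ I, ∀ y ∈ I, x ≠ y → KPaux.N2 f g x y ≠ 0 := by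
    intro x hx y hy hxy
    have hgxy : g x - g y ≠ 0 := sub_ne_zero.mpr (hgne x hx y hy hxy)
    have hMI := (hM x hx y hy).1
    have hφne : (f x - f y) / (g x - g y) ≠ deriv f y / deriv g y := by
      rw [← hMΔ x hx y hy hxy]
      exact hφinj.ne hMI hy (hMne x hx y hy hxy).2
    have hnum : (f x - f y) / (g x - g y) * deriv g y - deriv f y =
        deriv g y * ((f x - f y) / (g x - g y) - deriv f y / deriv g y) := by
      field_simp [hg' y hy]
    rw [KPaux.N2, hnum]
    exact div_ne_zero (mul_ne_zero (hg' y hy) (sub_ne_zero.mpr hφne)) hgxy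
  have hhdiff : ∀ x ∈ I, DifferentiableAt ℝ h x := fun x hx =>
    KPaux.h_differentiable hI hfd hgd hgne hcont hhmono hmono hM hMΔ hx
  have hkid : ∀ x ∈ I, ∀ y ∈ I, x ≠ y →
      deriv h y * KPaux.N1 f g x y = deriv h x * KPaux.N2 f g x y := fun x hx y hy hxy =>
    KPaux.key_identity hI hfd hgd hgne hcont hhmono hf'c hg'c hM hMΔ hN1ne hN2ne hhdiff hx hy hxy
  -- h' is nowhere zero
  have hhne : ∀ x ∈ I, deriv h x ≠ 0 := by
    intro x0 hx0 hx0e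
    have hall : ∀ y ∈ I, deriv h y = 0 := by
      intro y hy
      by_cases hxy : y = x0
      · rw [hxy]; exact hx0e
      · have := hkid x0 hx0 y hy (Ne.symm hxy)
        rw [hx0e, zero_mul] at this
        rcases mul_eq_zero.mp this with h1 | h1
        · exact h1
        · exact absurd h1 (hN1ne x0 hx0 y hy (Ne.symm hxy))
    obtain ⟨p, hp⟩ := hne
    obtain ⟨εp, hεp0, hballp⟩ := Metric.isOpen_iff.mp hI p hp
    rw [Real.ball_eq_Ioo] at hballp
    set p2 : ℝ := p + εp / 2 with hp2def
    have hp2I : p2 ∈ I := hballp ⟨by rw [hp2def]; linarith, by rw [hp2def]; linarith⟩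
    have hpp2 : p < p2 := by rw [hp2def]; linarith
    have hIcc2 : Set.Icc p p2 ⊆ I := hIc.out hp hp2I
    have hhc2 : ContinuousOn h (Set.Icc p p2) := hcont.mono hIcc2
    have hhd2 : DifferentiableOn ℝ h (Set.Ioo p p2) := fun t ht =>
      (hhdiff t (hIcc2 (Set.Ioo_subset_Icc_self ht))).differentiableWithinAt
    obtain ⟨c, hc, hceq⟩ := exists_deriv_eq_slope h hpp2 hhc2 hhd2
    have hcI : c ∈ I := hIcc2 (Set.Ioo_subset_Icc_self hc)
    rw [hall c hcI] at hceq
    have hne2 : p2 - p ≠ 0 := sub_ne_zero.mpr hpp2.ne'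
    have heq2 : h p2 = h p := by
      field_simp at hceq
      linarith
    rcases hhmono with hm | hm
    · exact absurd heq2 (hm hp hp2I hpp2).ne'
    · exact absurd heq2 (hm hp hp2I hpp2).ne
  -- the key functional-differential identity in symmetric form
  set U : ℝ → ℝ := fun t => deriv f t / deriv h t with hUdef
  set V : ℝ → ℝ := fun t => deriv g t / deriv h t with hVdef
  have key : ∀ x ∈ I, ∀ y ∈ I,
      (f x - f y) * (V x + V y) = (g x - g y) * (U x + U y) := by
    intro x hx y hy
    by_cases hxy : x = y
    · rw [hxy]; ring
    · have hk := hkid x hx y hy hxy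
      rw [KPaux.N1, KPaux.N2] at hk
      have e1 : g x - g y ≠ 0 := sub_ne_zero.mpr (hgne x hx y hy hxy)
      have e2 : deriv h x ≠ 0 := hhne x hx
      have e3 : deriv h y ≠ 0 := hhne y hy
      rw [hUdef, hVdef]
      field_simp at hk ⊢
      ring_nf at hk ⊢
      linarith [hk]
  -- pick three points
  obtain ⟨p, hp1⟩ := hne
  obtain ⟨εp, hεp0, hballp⟩ := Metric.isOpen_iff.mp hI p hp1
  rw [Real.ball_eq_Ioo] at hballp
  set p2 : ℝ := p + εp / 4 with hp2def
  set p3 : ℝ := p + εp / 2 with hp3def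
  have hp2 : p2 ∈ I := hballp ⟨by rw [hp2def]; linarith, by rw [hp2def]; linarith⟩
  have hp3 : p3 ∈ I := hballp ⟨by rw [hp3def]; linarith, by rw [hp3def]; linarith⟩
  have h12 : p < p2 := by rw [hp2def]; linarith
  have h23 : p2 < p3 := by rw [hp2def, hp3def]; linarith
  set F1 : ℝ := f p - f p2 with hF1def
  set G1 : ℝ := g p - g p2 with hG1def
  set F2 : ℝ := f p2 - f p3 with hF2def
  set G2 : ℝ := g p2 - g p3 with hG2def
  have hG1 : G1 ≠ 0 := sub_ne_zero.mpr (hgne p hp1 p2 hp2 h12.ne)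
  have hG2 : G2 ≠ 0 := sub_ne_zero.mpr (hgne p2 hp2 p3 hp3 h23.ne)
  have hs1 : F1 = deriv f (quasiMean I h p p2) / deriv g (quasiMean I h p p2) * G1 :=
    (div_eq_iff hG1).mp (hMΔ p hp1 p2 hp2 h12.ne).symm
  have hs2 : F2 = deriv f (quasiMean I h p2 p3) / deriv g (quasiMean I h p2 p3) * G2 :=
    (div_eq_iff hG2).mp (hMΔ p2 hp2 p3 hp3 h23.ne).symm
  have hsne : deriv f (quasiMean I h p p2) / deriv g (quasiMean I h p p2) ≠
      deriv f (quasiMean I h p2 p3) / deriv g (quasiMean I h p2 p3) := by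
    have hm1 := hMbtw p hp1 p2 hp2 h12
    have hm2 := hMbtw p2 hp2 p3 hp3 h23
    exact hφinj.ne (hM p hp1 p2 hp2).1 (hM p2 hp2 p3 hp3).1
      (ne_of_lt (lt_trans hm1.2 hm2.1))
  have hdet : F1 * G2 - F2 * G1 ≠ 0 := by
    rw [hs1, hs2]
    have : deriv f (quasiMean I h p p2) / deriv g (quasiMean I h p p2) * G1 * G2 -
        deriv f (quasiMean I h p2 p3) / deriv g (quasiMean I h p2 p3) * G2 * G1 =
        (deriv f (quasiMean I h p p2) / deriv g (quasiMean I h p p2) -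
          deriv f (quasiMean I h p2 p3) / deriv g (quasiMean I h p2 p3)) * (G1 * G2) := by
      ring
    rw [this]
    exact mul_ne_zero (sub_ne_zero.mpr hsne) (mul_ne_zero hG1 hG2)
  -- linear relations for U and V
  have e1 : ∀ x ∈ I, f x * (V p - V p2) - g x * (U p - U p2) - F1 * V x + G1 * U x =
      (f p * V p - g p * U p) - (f p2 * V p2 - g p2 * U p2) := by
    intro x hx
    have k1 := key x hx p hp1
    have k2 := key x hx p2 hp2
    rw [hF1def, hG1def]
    linear_combination k1 - k2
  have e2 : ∀ x ∈ I, f x * (V p2 - V p3) - g x * (U p2 - U p3) - F2 * V x + G2 * U x =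
      (f p2 * V p2 - g p2 * U p2) - (f p3 * V p3 - g p3 * U p3) := by
    intro x hx
    have k1 := key x hx p2 hp2
    have k2 := key x hx p3 hp3
    rw [hF2def, hG2def]
    linear_combination k1 - k2
  set a1 : ℝ := V p - V p2 with ha1def
  set a2 : ℝ := V p2 - V p3 with ha2def
  set b1 : ℝ := U p - U p2 with hb1def
  set b2 : ℝ := U p2 - U p3 with hb2def
  set C1 : ℝ := (f p * V p - g p * U p) - (f p2 * V p2 - g p2 * U p2) with hC1def
  set C2 : ℝ := (f p2 * V p2 - g p2 * U p2) - (f p3 * V p3 - g p3 * U p3) with hC2def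
  set au : ℝ := F2 * a1 - F1 * a2 with haudef
  set bu : ℝ := F1 * b2 - F2 * b1 with hbudef
  set cu : ℝ := F1 * C2 - F2 * C1 with hcudef
  set av : ℝ := G2 * a1 - G1 * a2 with havdef
  set bv : ℝ := G1 * b2 - G2 * b1 with hbvdef
  set cv : ℝ := G1 * C2 - G2 * C1 with hcvdef
  have hU : ∀ x ∈ I, (F1 * G2 - F2 * G1) * U x = au * f x + bu * g x + cu := by
    intro x hx
    rw [haudef, hbudef, hcudef, ha1def, ha2def, hb1def, hb2def, hC1def, hC2def]
    linear_combination F1 * (e2 x hx) - F2 * (e1 x hx)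
  have hV : ∀ x ∈ I, (F1 * G2 - F2 * G1) * V x = av * f x + bv * g x + cv := by
    intro x hx
    rw [havdef, hbvdef, hcvdef, ha1def, ha2def, hb1def, hb2def, hC1def, hC2def]
    linear_combination G1 * (e2 x hx) - G2 * (e1 x hx)
  -- the conic relation
  have conic0 : ∀ x ∈ I,
      av * f x ^ 2 + (bv - au) * f x * g x + -bu * g x ^ 2 +
        (2 * cv + (bv + au) * g p) * f x + (-(2 * cu) - (bv + au) * f p) * g x +
        -(av * f p ^ 2 + (bv - au) * f p * g p + -bu * g p ^ 2 + 2 * cv * f p -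
          2 * cu * g p) = 0 := by
    intro x hx
    have k1 := key x hx p hp1
    have hUx := hU x hx
    have hUp := hU p hp1
    have hVx := hV x hx
    have hVp := hV p hp1
    linear_combination (F1 * G2 - F2 * G1) * k1 - (f x - f p) * hVx - (f x - f p) * hVp +
      (g x - g p) * hUx + (g x - g p) * hUp
  by_cases hdeg : av = 0 ∧ bv = au ∧ bu = 0
  · obtain ⟨hA, hB, hC⟩ := hdeg
    set δ' : ℝ := bv * g p + cv with hδ'def
    set ε' : ℝ := -(bv * f p + cu) with hε'def
    set η' : ℝ := cu * g p - cv * f p with hη'def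
    have hδ'ne : δ' ≠ 0 := by
      have hVp := hV p hp1
      have hδeq : δ' = (F1 * G2 - F2 * G1) * V p := by
        rw [hVp, hA, hδ'def]; ring
      rw [hδeq]
      exact mul_ne_zero hdet (div_ne_zero (hg' p hp1) (hhne p hp1))
    have lin : ∀ x ∈ I, δ' * f x + ε' * g x + η' = 0 := by
      intro x hx
      have hc0 := conic0 x hx
      rw [hδ'def, hε'def, hη'def]
      linear_combination hc0 / 2 + ((f p ^ 2 - f x ^ 2) / 2) * hA +
        ((g p * f x - f p * g x - f x * g x + f p * g p) / 2) * hB +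
        ((g x ^ 2 - g p ^ 2) / 2) * hC
    refine ⟨δ' ^ 2, 2 * δ' * ε', ε' ^ 2, 2 * δ' * η', 2 * ε' * η', η' ^ 2, ?_, ?_⟩
    · intro hcon
      simp only [Prod.mk.injEq] at hcon
      exact hδ'ne (pow_eq_zero_iff two_ne_zero |>.mp hcon.1)
    · intro x hx
      linear_combination (δ' * f x + ε' * g x + η') * (lin x hx)
  · refine ⟨av, bv - au, -bu, 2 * cv + (bv + au) * g p, -(2 * cu) - (bv + au) * f p,
      -(av * f p ^ 2 + (bv - au) * f p * g p + -bu * g p ^ 2 + 2 * cv * f p - 2 * cu * g p),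
      ?_, conic0⟩
    intro hcon
    simp only [Prod.mk.injEq] at hcon
    exact hdeg ⟨hcon.1, sub_eq_zero.mp hcon.2.1, neg_eq_zero.mp hcon.2.2⟩
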